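/- The essential MO tensor A(n,m), defined by A_{i_1...i_m} = i_1 if i_1 = ··· = i_m and min{i_1,...,i_m} - 1 otherwise, admits the completely positive decomposition A(n,m) = Σ_{i=1}^n e_i^{⊗m} + Σ_{i=2}^n r_i^{⊗m}, where e_i is the i-th standard basis vector and r_i is the 0-1 vector with (r_i)_j = 1 iff j ≥ i. -/

import Mathlib

/-- The essential MO tensor of order `m` and dimension `n` (1-based indices on `Fin n`):
entry `i₁` on the diagonal, `min{i₁,...,i_m} - 1` off the diagonal. -/
noncomputable def EssMO (n m : ℕ) (idx : Fin m → Fin n) : ℝ :=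
  if ∀ k l, idx k = idx l then ((sInf (Set.range fun k => (idx k : ℕ) + 1)) : ℕ)
  else (((sInf (Set.range fun k => (idx k : ℕ) + 1)) : ℕ) : ℝ) - 1

theorem essMO_cp_decomposition (n m : ℕ) (hn : 0 < n) (hm : 0 < m) :
    ∀ idx : Fin m → Fin n,
      EssMO n m idx =
        (∑ i : Fin n, ∏ k, (if idx k = i then (1 : ℝ) else 0)) +
          ∑ i ∈ Finset.univ.filter (fun i : Fin n => 1 ≤ (i : ℕ)),
            ∏ k, (if i ≤ idx k then (1 : ℝ) else 0) := by
  intro idx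
  have hmne : (Finset.univ : Finset (Fin m)).Nonempty :=
    Finset.univ_nonempty_iff.mpr (Fin.pos_iff_nonempty.mp hm)
  set a : Fin n := Finset.univ.inf' hmne idx with ha
  obtain ⟨k0, -, hk0⟩ := Finset.exists_mem_eq_inf' hmne idx
  have hk0' : idx k0 = a := hk0.symm
  have hinf : sInf (Set.range fun k => (idx k : ℕ) + 1) = (a : ℕ) + 1 := by
    apply le_antisymm
    · exact Nat.sInf_le ⟨k0, by simp [hk0']⟩
    · refine le_csInf ⟨_, Set.mem_range_self k0⟩ ?_
      rintro x ⟨k, rfl⟩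
      have : a ≤ idx k := Finset.inf'_le idx (Finset.mem_univ k)
      simpa using Nat.add_le_add_right (Fin.le_iff_val_le_val.mp this) 1
  have hle : ∀ i : Fin n, (∀ k, i ≤ idx k) ↔ i ≤ a := by
    intro i
    rw [ha, Finset.le_inf'_iff]
    simp
  have h2 : (∑ i ∈ Finset.univ.filter (fun i : Fin n => 1 ≤ (i : ℕ)),
      ∏ k, (if i ≤ idx k then (1 : ℝ) else 0)) = (a : ℕ) := by
    simp only [Finset.prod_boole, Finset.mem_univ, forall_const, Finset.sum_boole, mul_one]
    norm_num
    have : Finset.filter (fun i : Fin n => ∀ k, i ≤ idx k)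
        (Finset.filter (fun i : Fin n => 1 ≤ (i : ℕ)) Finset.univ) =
        Finset.filter (fun i : Fin n => 1 ≤ (i : ℕ) ∧ (i : ℕ) ≤ (a : ℕ)) Finset.univ := by
      ext i
      have hle' := hle i
      simp only [Fin.le_def] at hle'
      simp only [Finset.mem_filter, Finset.mem_univ, true_and, Fin.le_def]
      rw [hle', and_comm]
    rw [this]
    have hcard : (Finset.filter (fun i : Fin n => 1 ≤ (i:ℕ) ∧ (i:ℕ) ≤ (a:ℕ)) Finset.univ).card
        = (Finset.Icc 1 (a:ℕ)).card := by
      refine Finset.card_nbij (fun i => (i:ℕ)) ?_ ?_ ?_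
      · intro x hx; simp at hx ⊢; omega
      · intro x hx y hy h; exact Fin.val_injective h
      · intro x hx
        simp only [Finset.coe_filter, Finset.mem_Icc, Finset.coe_Icc, Set.mem_Icc] at hx ⊢
        exact ⟨⟨x, lt_of_le_of_lt hx.2 a.isLt⟩, ⟨Finset.mem_univ _, hx.1, hx.2⟩, rfl⟩
    rw [hcard, Nat.card_Icc]; omega
  rw [h2]
  unfold EssMO
  by_cases h : ∀ k l, idx k = idx l
  · rw [if_pos h, hinf]
    have h1 : (∑ i : Fin n, ∏ k, (if idx k = i then (1:ℝ) else 0)) = 1 := by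
      have key : ∀ i : Fin n,
          (∏ k, (if idx k = i then (1:ℝ) else 0)) = if idx k0 = i then 1 else 0 := by
        intro i
        have hiff : (∀ k ∈ Finset.univ, idx k = i) ↔ idx k0 = i :=
          ⟨fun hall => hall k0 (Finset.mem_univ _),
           fun he k _ => (h k k0).trans he⟩
        simp only [Finset.prod_boole, hiff]
      rw [Finset.sum_congr rfl (fun i _ => key i)]
      simp
    rw [h1]; push_cast; ring
  · rw [if_neg h]
    have h1 : (∑ i : Fin n, ∏ k, (if idx k = i then (1:ℝ) else 0)) = 0 := by
      apply Finset.sum_eq_zero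
      intro i _
      push_neg at h
      obtain ⟨k, l, hkl⟩ := h
      simp only [Finset.prod_boole]
      rw [if_neg]
      intro hall
      exact hkl ((hall k (Finset.mem_univ _)).trans (hall l (Finset.mem_univ _)).symm)
    rw [h1, hinf]
    push_cast
    ring
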